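/- Suppose an integral allocation x, prices p, and MBB values α satisfy: for every agent i and good j, u_{i,j,m(j,x_i)+1}/p_j ≤ α_i ≤ u_{i,j,m(j,x_i)}/p_j (with the conventions that the upper bound is +∞ if m(j,x_i)=0 and the lower bound is 0 if all copies of j are assigned to i). If for uncapped agent i and agent k there exists a good g ∈ x_k with P_k(x_k − g) ≤ (1+4ε)·P_i(x_i), where P_a(S) = u_a(S)/α_a, then u_i(x_k − g) ≤ (2+4ε)·u_i(x_i). -/

import Mathlib

open Finset

/-- Utility of a multiset bundle `S` (given by its multiplicity function) for an agent
with per-copy utilities `u j ℓ` (the utility of the `(ℓ+1)`-st copy of good `j`). -/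
noncomputable def bundleUtil {m : ℕ} (u : Fin m → ℕ → ℝ) (S : Fin m → ℕ) : ℝ :=
  ∑ j, ∑ ℓ ∈ Finset.range (S j), u j ℓ

/-- Suppose an integral allocation `x`, prices `p` and MBB values `α` satisfy
the MBB interval condition `u_{i,j,m(j,x_i)+1} ≤ α_i p_j ≤ u_{i,j,m(j,x_i)}`
(with the boundary conventions). If for agents `i` and `k` there is a good `g ∈ x_k`
with `P_k(x_k − g) ≤ (1+4ε)·P_i(x_i)`, where `P_a(S) = u_a(S)/α_a`, then
`u_i(x_k − g) ≤ (2+4ε)·u_i(x_i)`. -/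
theorem envy_up_to_one_factor_two {n m : ℕ} (kcopies : Fin m → ℕ)
    (u : Fin n → Fin m → ℕ → ℝ)
    (hmono : ∀ i j ℓ, u i j (ℓ + 1) ≤ u i j ℓ)
    (hnn : ∀ i j ℓ, 0 ≤ u i j ℓ)
    (α : Fin n → ℝ) (p : Fin m → ℝ) (hα : ∀ i, 0 < α i) (hp : ∀ j, 0 < p j)
    (x : Fin n → Fin m → ℕ) (halloc : ∀ j, ∑ i, x i j = kcopies j)
    (hub : ∀ i j, x i j < kcopies j → u i j (x i j) ≤ α i * p j)
    (hlb : ∀ i j, 0 < x i j → α i * p j ≤ u i j (x i j - 1))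
    (ε : ℝ) (hε : 0 < ε) (i k : Fin n) (g : Fin m) (hg : 0 < x k g)
    (hP : bundleUtil (u k) (Function.update (x k) g (x k g - 1)) / α k ≤
      (1 + 4 * ε) * (bundleUtil (u i) (x i) / α i)) :
    bundleUtil (u i) (Function.update (x k) g (x k g - 1)) ≤
      (2 + 4 * ε) * bundleUtil (u i) (x i) := by
  set S := Function.update (x k) g (x k g - 1) with hS
  have hSle : ∀ j, S j ≤ x k j := by
    intro j
    rcases eq_or_ne j g with rfl | h
    · simp [hS]
    · simp [hS, Function.update_of_ne h]
  have hanti : ∀ a j, Antitone (u a j) := fun a j => antitone_nat_of_succ_le (hmono a j)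
  have hUxi_nn : 0 ≤ bundleUtil (u i) (x i) :=
    Finset.sum_nonneg fun j _ => Finset.sum_nonneg fun ℓ _ => hnn i j ℓ
  have hαi := hα i; have hαk := hα k
  by_cases hik : i = k
  · subst hik
    have hle : bundleUtil (u i) S ≤ bundleUtil (u i) (x i) := by
      apply Finset.sum_le_sum; intro j _
      exact Finset.sum_le_sum_of_subset_of_nonneg (Finset.range_subset_range.2 (hSle j))
        (fun ℓ _ _ => hnn i j ℓ)
    nlinarith
  · have hsum : ∀ j, x i j + x k j ≤ kcopies j := by
      intro j
      rw [← halloc j]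
      calc x i j + x k j = ∑ a ∈ {i, k}, x a j := by rw [Finset.sum_pair hik]
        _ ≤ ∑ a, x a j := Finset.sum_le_sum_of_subset (Finset.subset_univ _)
    have L1 : bundleUtil (u i) S ≤ bundleUtil (u i) (x i) + α i * ∑ j, (S j : ℝ) * p j := by
      unfold bundleUtil
      rw [Finset.mul_sum, ← Finset.sum_add_distrib]
      apply Finset.sum_le_sum; intro j _
      by_cases hle : S j ≤ x i j
      · have h1 : ∑ ℓ ∈ Finset.range (S j), u i j ℓ ≤ ∑ ℓ ∈ Finset.range (x i j), u i j ℓ :=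
          Finset.sum_le_sum_of_subset_of_nonneg (Finset.range_subset_range.2 hle)
            (fun ℓ _ _ => hnn i j ℓ)
        have h2 : 0 ≤ α i * ((S j : ℝ) * p j) :=
          mul_nonneg hαi.le (mul_nonneg (Nat.cast_nonneg _) (hp j).le)
        linarith
      · push_neg at hle
        have hxlt : x i j < kcopies j := by
          have h1 := hsum j; have h2 := hSle j; omega
        have hub' : u i j (x i j) ≤ α i * p j := hub i j hxlt
        have hsplit : Finset.range (S j) = Finset.range (x i j) ∪ Finset.Ico (x i j) (S j) := by
          rw [Finset.range_eq_Ico, Finset.range_eq_Ico, Finset.Ico_union_Ico_eq_Ico (Nat.zero_le _) hle.le]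
        rw [hsplit, Finset.sum_union (by
          rw [Finset.range_eq_Ico]; exact Finset.Ico_disjoint_Ico_consecutive _ _ _)]
        have h3 : ∑ ℓ ∈ Finset.Ico (x i j) (S j), u i j ℓ ≤
            ∑ ℓ ∈ Finset.Ico (x i j) (S j), α i * p j := by
          apply Finset.sum_le_sum; intro ℓ hℓ
          exact le_trans (hanti i j (Finset.mem_Ico.1 hℓ).1) hub'
        rw [Finset.sum_const, Nat.card_Ico, nsmul_eq_mul] at h3
        have h4 : ((S j - x i j : ℕ) : ℝ) ≤ (S j : ℝ) := by exact_mod_cast Nat.sub_le _ _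
        have hαp : 0 ≤ α i * p j := mul_nonneg hαi.le (hp j).le
        have hSj : (0:ℝ) ≤ (S j : ℝ) := Nat.cast_nonneg _
        nlinarith
    have L2 : α k * ∑ j, (S j : ℝ) * p j ≤ bundleUtil (u k) S := by
      unfold bundleUtil
      rw [Finset.mul_sum]
      apply Finset.sum_le_sum; intro j _
      by_cases h0 : S j = 0
      · simp [h0]
      · have hx0 : 0 < x k j := lt_of_lt_of_le (Nat.pos_of_ne_zero h0) (hSle j)
        have hlb' : α k * p j ≤ u k j (x k j - 1) := hlb k j hx0
        calc α k * ((S j : ℝ) * p j) = ∑ ℓ ∈ Finset.range (S j), α k * p j := by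
              rw [Finset.sum_const, Finset.card_range, nsmul_eq_mul]; ring
          _ ≤ ∑ ℓ ∈ Finset.range (S j), u k j ℓ := by
              apply Finset.sum_le_sum; intro ℓ hℓ
              have hℓ' : ℓ ≤ x k j - 1 := by
                have h1 := Finset.mem_range.1 hℓ; have h2 := hSle j; omega
              exact le_trans hlb' (hanti k j hℓ')
    have key : ∑ j, (S j : ℝ) * p j ≤ (1 + 4 * ε) * (bundleUtil (u i) (x i) / α i) := by
      have h1 : ∑ j, (S j : ℝ) * p j ≤ bundleUtil (u k) S / α k := by
        rw [le_div_iff₀ hαk]; nlinarith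
      linarith
    have h5 : α i * ∑ j, (S j : ℝ) * p j ≤ (1 + 4 * ε) * bundleUtil (u i) (x i) := by
      have h6 := mul_le_mul_of_nonneg_left key hαi.le
      have h7 : α i * ((1 + 4 * ε) * (bundleUtil (u i) (x i) / α i)) =
          (1 + 4 * ε) * bundleUtil (u i) (x i) := by
        field_simp
      linarith
    linarith
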